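/- arXiv:1205.4126 — 3 statements merged into one kernel-verified Lean document; each statement's English description precedes it below -/
import Mathlib

section
/- Let ξ be Rayleigh with parameter √λ₂, let T₂ = (2/(γ₁λ₂))·√(ξ² − 2γ₁λ₂(γ₂−γ₁)) when ξ² > 2γ₁λ₂(γ₂−γ₁) and T₂ = 0 otherwise, with γ₂ ≥ γ₁ > 0. Then, conditioning on ξ ≥ γ₁λ₂τ₁/2, P(T₂ = 0) = 1(τ₁ ≤ τ₁*)·[1 − exp(−V(τ₁*)²)/exp(−Vτ₁²)], where V = γ₁²λ₂/8 and τ₁* = √(8(γ₂−γ₁)/(γ₁λ₂)). -/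
open MeasureTheory ProbabilityTheory Real Filter Topology

/-- Equation (15): the atom at 0 of the conditional length T₂ of the successive
excursion above γ₂, given an excursion above γ₁ of length ≥ τ₁. -/
theorem cond_prob_T2_eq_zero {Ω : Type*} [MeasureSpace Ω]
    [IsProbabilityMeasure (ℙ : Measure Ω)]
    (lam2 γ₁ γ₂ τ₁ : ℝ) (hlam2 : 0 < lam2) (hγ₁ : 0 < γ₁) (hγ₂ : γ₁ ≤ γ₂) (hτ₁ : 0 ≤ τ₁)
    (ξ : Ω → ℝ) (hmeas : Measurable ξ)
    (hcdf : ∀ x : ℝ, 0 ≤ x →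
      ℙ {ω | ξ ω ≤ x} = ENNReal.ofReal (1 - Real.exp (-(x ^ 2) / (2 * lam2))))
    (T₂ : Ω → ℝ)
    (hT₂ : ∀ ω, T₂ ω =
      if (ξ ω) ^ 2 > 2 * γ₁ * lam2 * (γ₂ - γ₁) then
        2 / (γ₁ * lam2) * Real.sqrt ((ξ ω) ^ 2 - 2 * γ₁ * lam2 * (γ₂ - γ₁))
      else 0)
    (V τ₁star : ℝ) (hV : V = γ₁ ^ 2 * lam2 / 8)
    (hτ₁star : τ₁star = Real.sqrt (8 * (γ₂ - γ₁) / (γ₁ * lam2))) :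
    ℙ[{ω | T₂ ω = 0} | {ω | γ₁ * lam2 * τ₁ / 2 ≤ ξ ω}] =
      ENNReal.ofReal
        (if τ₁ ≤ τ₁star then
          1 - Real.exp (-V * τ₁star ^ 2) / Real.exp (-V * τ₁ ^ 2)
        else 0) := by
  have hgl2 : 0 < γ₁ * lam2 := mul_pos hγ₁ hlam2
  set a : ℝ := γ₁ * lam2 * τ₁ / 2 with ha
  set b : ℝ := γ₁ * lam2 * τ₁star / 2 with hb
  have hτstar0 : 0 ≤ τ₁star := hτ₁star ▸ Real.sqrt_nonneg _
  have ha0 : 0 ≤ a := div_nonneg (mul_nonneg hgl2.le hτ₁) (by norm_num)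
  have hb0 : 0 ≤ b := div_nonneg (mul_nonneg hgl2.le hτstar0) (by norm_num)
  have hmIic : ∀ y : ℝ, MeasurableSet {ω | ξ ω ≤ y} := fun y => hmeas measurableSet_Iic
  have hmIci : ∀ y : ℝ, MeasurableSet {ω | y ≤ ξ ω} := fun y => hmeas measurableSet_Ici
  have hmIoi : ∀ y : ℝ, MeasurableSet {ω | y < ξ ω} := fun y => hmeas measurableSet_Ioi
  have hτsq : τ₁star ^ 2 = 8 * (γ₂ - γ₁) / (γ₁ * lam2) := by
    rw [hτ₁star, Real.sq_sqrt (div_nonneg (by linarith) hgl2.le)]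
  have hbsq : b ^ 2 = 2 * γ₁ * lam2 * (γ₂ - γ₁) := by
    have h1 : b ^ 2 = (γ₁ * lam2) ^ 2 * τ₁star ^ 2 / 4 := by rw [hb]; ring
    rw [h1, hτsq]
    field_simp
    ring
  -- CDF facts
  have hF0 : ℙ {ω | ξ ω ≤ (0:ℝ)} = 0 := by
    rw [hcdf 0 le_rfl]; simp
  have htail_lt : ∀ x : ℝ, 0 ≤ x →
      ℙ {ω | x < ξ ω} = ENNReal.ofReal (Real.exp (-(x ^ 2) / (2 * lam2))) := by
    intro x hx
    have hset : {ω | x < ξ ω} = {ω | ξ ω ≤ x}ᶜ := by ext ω; simp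
    have hle1 : Real.exp (-(x ^ 2) / (2 * lam2)) ≤ 1 := by
      rw [Real.exp_le_one_iff, neg_div]
      exact neg_nonpos.mpr (div_nonneg (sq_nonneg x) (by linarith))
    rw [hset, measure_compl (hmIic x) (measure_ne_top _ _), measure_univ,
      hcdf x hx, ← ENNReal.ofReal_one, ← ENNReal.ofReal_sub _ (by linarith)]
    norm_num
  have htail_le : ∀ x : ℝ, 0 ≤ x →
      ℙ {ω | x ≤ ξ ω} = ENNReal.ofReal (Real.exp (-(x ^ 2) / (2 * lam2))) := by
    intro x hx
    set s : ℕ → Set Ω := fun n => {ω | x - 1 / (n + 1) < ξ ω} with hs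
    have hsm : ∀ n, MeasurableSet (s n) := fun n => hmIoi _
    have hanti : Antitone s := by
      intro n m hnm ω hω
      simp only [hs, Set.mem_setOf_eq] at *
      have h1 : (1:ℝ) / (m + 1) ≤ 1 / (n + 1) := by
        apply one_div_le_one_div_of_le
        · positivity
        · have hc : (n : ℝ) ≤ m := Nat.cast_le.mpr hnm
          linarith
      linarith
    have hInter : ⋂ n, s n = {ω | x ≤ ξ ω} := by
      ext ω
      simp only [Set.mem_iInter, hs, Set.mem_setOf_eq]
      constructor
      · intro h
        by_contra hlt
        push_neg at hlt
        obtain ⟨n, hn⟩ := exists_nat_one_div_lt (sub_pos.mpr hlt)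
        have := h n
        linarith
      · intro h n
        have h2 : (0:ℝ) < 1 / (n + 1) := by positivity
        linarith
    have h1 := tendsto_measure_iInter_atTop (μ := ℙ)
      (fun n => (hsm n).nullMeasurableSet) hanti ⟨0, measure_ne_top _ _⟩
    rw [hInter] at h1
    have hval : ∀ n : ℕ, ℙ (s n) =
        ENNReal.ofReal (Real.exp (-(max (x - 1 / (n + 1)) 0) ^ 2 / (2 * lam2))) := by
      intro n
      rcases le_or_gt 0 (x - 1 / (n + 1)) with hy | hy
      · rw [max_eq_left hy]; exact htail_lt _ hy
      · have hz : ℙ {ω | ξ ω ≤ x - 1 / (n + 1)} = 0 := by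
          refine le_antisymm (le_trans (measure_mono ?_) hF0.le) zero_le
          exact fun ω hω => le_trans hω hy.le
        have hset : s n = {ω | ξ ω ≤ x - 1 / (n + 1)}ᶜ := by ext ω; simp [hs]
        rw [hset, measure_compl (hmIic _) (measure_ne_top _ _), hz,
          measure_univ, max_eq_right hy.le]
        simp
    have hcont : Continuous fun t : ℝ =>
        ENNReal.ofReal (Real.exp (-(max (x - t) 0) ^ 2 / (2 * lam2))) := by
      apply ENNReal.continuous_ofReal.comp
      apply Real.continuous_exp.comp
      fun_prop
    have hlim : Tendsto (fun n : ℕ => (1:ℝ) / (n + 1)) atTop (𝓝 0) :=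
      tendsto_one_div_add_atTop_nhds_zero_nat
    have h2 : Tendsto (⇑ℙ ∘ s) atTop
        (𝓝 (ENNReal.ofReal (Real.exp (-(x ^ 2) / (2 * lam2))))) := by
      have h3 := (hcont.tendsto 0).comp hlim
      have heq : ⇑ℙ ∘ s = fun n : ℕ =>
          ENNReal.ofReal (Real.exp (-(max (x - 1 / (n + 1)) 0) ^ 2 / (2 * lam2))) :=
        funext hval
      rw [heq]
      simpa [Function.comp_def, max_eq_left hx] using h3
    exact tendsto_nhds_unique h1 h2
  -- the event T₂ = 0
  have hS0 : {ω | T₂ ω = 0} = {ω | ξ ω ^ 2 ≤ 2 * γ₁ * lam2 * (γ₂ - γ₁)} := by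
    ext ω
    simp only [Set.mem_setOf_eq, hT₂ ω]
    split_ifs with h
    · constructor
      · intro h0
        exfalso
        have h1 : 0 < Real.sqrt ((ξ ω) ^ 2 - 2 * γ₁ * lam2 * (γ₂ - γ₁)) :=
          Real.sqrt_pos.mpr (by linarith)
        have h2 : 0 < 2 / (γ₁ * lam2) := by positivity
        nlinarith
      · intro h0; linarith
    · push_neg at h
      simp [h]
  have hAS : {ω | a ≤ ξ ω} ∩ {ω | T₂ ω = 0} = {ω | a ≤ ξ ω} ∩ {ω | ξ ω ≤ b} := by
    rw [hS0]
    ext ω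
    simp only [Set.mem_inter_iff, Set.mem_setOf_eq]
    constructor
    · rintro ⟨h1, h2⟩
      refine ⟨h1, ?_⟩
      nlinarith
    · rintro ⟨h1, h2⟩
      refine ⟨h1, ?_⟩
      nlinarith
  have hEa : -(a ^ 2) / (2 * lam2) = -V * τ₁ ^ 2 := by
    rw [hV, ha]
    field_simp
    ring
  have hEb : -(b ^ 2) / (2 * lam2) = -V * τ₁star ^ 2 := by
    rw [hV, hb]
    field_simp
    ring
  rw [ProbabilityTheory.cond_apply (hmIci a) ℙ, hAS]
  by_cases hcase : τ₁ ≤ τ₁star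
  · have hab : a ≤ b := by
      rw [ha, hb]
      have := mul_le_mul_of_nonneg_left hcase hgl2.le
      linarith
    have hsub : {ω | b < ξ ω} ⊆ {ω | a ≤ ξ ω} :=
      fun ω hω => le_of_lt (lt_of_le_of_lt hab hω)
    have hset2 : {ω | a ≤ ξ ω} ∩ {ω | ξ ω ≤ b} = {ω | a ≤ ξ ω} \ {ω | b < ξ ω} := by
      ext ω
      simp only [Set.mem_inter_iff, Set.mem_diff, Set.mem_setOf_eq, not_lt]
    rw [hset2, measure_diff hsub (hmIoi b).nullMeasurableSet
      (measure_ne_top _ _), htail_le a ha0, htail_lt b hb0, hEa, hEb, if_pos hcase]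
    have hle : Real.exp (-V * τ₁star ^ 2) ≤ Real.exp (-V * τ₁ ^ 2) := by
      apply Real.exp_le_exp.mpr
      have hV0 : 0 ≤ V := by rw [hV]; positivity
      have h4 : τ₁ ^ 2 ≤ τ₁star ^ 2 := by nlinarith
      nlinarith [mul_le_mul_of_nonneg_left h4 hV0]
    rw [← ENNReal.ofReal_sub _ (Real.exp_nonneg _), ← ENNReal.div_eq_inv_mul,
      ← ENNReal.ofReal_div_of_pos (Real.exp_pos _)]
    congr 1
    rw [sub_div, div_self (Real.exp_ne_zero _)]
  · have hba : b < a := by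
      push_neg at hcase
      rw [ha, hb]
      have := mul_lt_mul_of_pos_left hcase hgl2
      linarith
    have hempty : {ω | a ≤ ξ ω} ∩ {ω | ξ ω ≤ b} = ∅ := by
      ext ω
      simp only [Set.mem_inter_iff, Set.mem_setOf_eq, Set.mem_empty_iff_false, iff_false,
        not_and, not_le]
      intro h1
      linarith
    rw [hempty, measure_empty, mul_zero, if_neg hcase, ENNReal.ofReal_zero]
end

section
/- Let ξ be Rayleigh with parameter √λ₂, γ₂ ≥ γ₁ > 0, τ₁ ≥ 0, V = γ₁²λ₂/8, τ₁* = √(8(γ₂−γ₁)/(γ₁λ₂)), and T₂ = (2/(γ₁λ₂))·√(max{ξ² − 2γ₁λ₂(γ₂−γ₁), 0}). Then for every τ ≥ 0, P(T₂ > τ | ξ ≥ γ₁λ₂τ₁/2) = exp(−V·max{τ² + (τ₁*)², τ₁²}) / exp(−V τ₁²). -/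
open MeasureTheory ProbabilityTheory Real

/-- Equation (16): tail of the conditional length T₂ of the successive
excursion above γ₂ given an excursion above γ₁ of length ≥ τ₁. -/
theorem cond_tail_T2 {Ω : Type*} [MeasureSpace Ω]
    [IsProbabilityMeasure (ℙ : Measure Ω)]
    (lam2 γ₁ γ₂ τ₁ : ℝ) (hlam2 : 0 < lam2) (hγ₁ : 0 < γ₁) (hγ₂ : γ₁ ≤ γ₂) (hτ₁ : 0 ≤ τ₁)
    (ξ : Ω → ℝ) (hmeas : Measurable ξ)
    (hcdf : ∀ x : ℝ, 0 ≤ x →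
      ℙ {ω | ξ ω ≤ x} = ENNReal.ofReal (1 - Real.exp (-(x ^ 2) / (2 * lam2))))
    (T₂ : Ω → ℝ)
    (hT₂ : ∀ ω, T₂ ω =
      2 / (γ₁ * lam2) * Real.sqrt (max ((ξ ω) ^ 2 - 2 * γ₁ * lam2 * (γ₂ - γ₁)) 0))
    (V τ₁star : ℝ) (hV : V = γ₁ ^ 2 * lam2 / 8)
    (hτ₁star : τ₁star = Real.sqrt (8 * (γ₂ - γ₁) / (γ₁ * lam2))) :
    ∀ τ : ℝ, 0 ≤ τ →
      ℙ[{ω | T₂ ω > τ} | {ω | γ₁ * lam2 * τ₁ / 2 ≤ ξ ω}] =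
        ENNReal.ofReal
          (Real.exp (-V * max (τ ^ 2 + τ₁star ^ 2) (τ₁ ^ 2)) /
            Real.exp (-V * τ₁ ^ 2)) := by
  intro τ hτ
  have hgl : 0 < γ₁ * lam2 := mul_pos hγ₁ hlam2
  have h2l : (0:ℝ) < 2 * lam2 := by linarith
  have hl0 : lam2 ≠ 0 := ne_of_gt hlam2
  have hγ0 : γ₁ ≠ 0 := ne_of_gt hγ₁
  -- tail probabilities of the Rayleigh variable
  have tail_gt : ∀ x : ℝ, 0 ≤ x →
      ℙ {ω | x < ξ ω} = ENNReal.ofReal (Real.exp (-(x ^ 2) / (2 * lam2))) := by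
    intro x hx
    have hset : {ω : Ω | x < ξ ω} = {ω : Ω | ξ ω ≤ x}ᶜ := by
      ext ω; simp [not_le]
    have hm : MeasurableSet {ω : Ω | ξ ω ≤ x} := hmeas measurableSet_Iic
    have hexp_le : Real.exp (-(x ^ 2) / (2 * lam2)) ≤ 1 := by
      rw [Real.exp_le_one_iff]
      exact div_nonpos_of_nonpos_of_nonneg (neg_nonpos.mpr (by positivity)) h2l.le
    rw [hset, prob_compl_eq_one_sub hm, hcdf x hx]
    rw [show (1:ENNReal) = ENNReal.ofReal 1 from ENNReal.ofReal_one.symm]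
    rw [← ENNReal.ofReal_sub 1 (by linarith)]
    congr 1
    ring
  have tail_ge : ∀ x : ℝ, 0 ≤ x →
      ℙ {ω | x ≤ ξ ω} = ENNReal.ofReal (Real.exp (-(x ^ 2) / (2 * lam2))) := by
    intro x hx
    refine le_antisymm ?_ ?_
    · rcases eq_or_lt_of_le hx with h0 | h0
      · rw [← h0]
        have : Real.exp (-((0:ℝ) ^ 2) / (2 * lam2)) = 1 := by norm_num
        rw [this, ENNReal.ofReal_one]
        exact prob_le_one
      · have hne : (nhdsWithin x (Set.Iio x)).NeBot := nhdsLT_neBot x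
        have hcont : Continuous fun y : ℝ => Real.exp (-(y ^ 2) / (2 * lam2)) := by
          continuity
        have htend : Filter.Tendsto
            (fun y : ℝ => ENNReal.ofReal (Real.exp (-(y ^ 2) / (2 * lam2))))
            (nhdsWithin x (Set.Iio x))
            (nhds (ENNReal.ofReal (Real.exp (-(x ^ 2) / (2 * lam2))))) :=
          ((ENNReal.continuous_ofReal.comp hcont).tendsto x).mono_left nhdsWithin_le_nhds
        refine ge_of_tendsto htend ?_
        filter_upwards [Ioo_mem_nhdsLT_of_mem (Set.mem_Ioc.mpr ⟨h0, le_refl x⟩)] with y hy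
        rw [← tail_gt y hy.1.le]
        exact measure_mono fun ω hω => show y < ξ ω from lt_of_lt_of_le hy.2 hω
    · rw [← tail_gt x hx]
      exact measure_mono fun ω hω => show x ≤ ξ ω from le_of_lt hω
  -- abbreviations
  set b : ℝ := γ₁ * lam2 * τ₁ / 2 with hbdef
  have hb0 : 0 ≤ b := by positivity
  set c : ℝ := 2 * γ₁ * lam2 * (γ₂ - γ₁) with hcdef
  have hc0 : 0 ≤ c := mul_nonneg (by positivity) (sub_nonneg.mpr hγ₂)
  set s : ℝ := Real.sqrt (c + (γ₁ * lam2 * τ / 2) ^ 2) with hsdef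
  have hs0 : 0 ≤ s := Real.sqrt_nonneg _
  have hs2 : s ^ 2 = c + (γ₁ * lam2 * τ / 2) ^ 2 :=
    Real.sq_sqrt (add_nonneg hc0 (sq_nonneg _))
  have hτs2 : τ₁star ^ 2 = 8 * (γ₂ - γ₁) / (γ₁ * lam2) := by
    rw [hτ₁star]
    exact Real.sq_sqrt (div_nonneg (by linarith) hgl.le)
  have hs2' : s ^ 2 = (γ₁ * lam2 / 2) ^ 2 * (τ ^ 2 + τ₁star ^ 2) := by
    rw [hs2, hτs2, hcdef]
    field_simp
    ring
  have hb2' : b ^ 2 = (γ₁ * lam2 / 2) ^ 2 * τ₁ ^ 2 := by rw [hbdef]; ring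
  have hk : (0:ℝ) < (γ₁ * lam2 / 2) ^ 2 := by positivity
  -- event identification
  have hBm : MeasurableSet {ω : Ω | b ≤ ξ ω} := hmeas measurableSet_Ici
  have hABeq : {ω : Ω | b ≤ ξ ω} ∩ {ω | T₂ ω > τ}
      = {ω : Ω | b ≤ ξ ω} ∩ {ω | s < ξ ω} := by
    ext ω
    simp only [Set.mem_inter_iff, Set.mem_setOf_eq]
    refine and_congr_right fun hbω => ?_
    have hξ0 : 0 ≤ ξ ω := le_trans hb0 hbω
    rw [hT₂ ω, gt_iff_lt]
    rw [show 2 / (γ₁ * lam2) * Real.sqrt (max (ξ ω ^ 2 - c) 0)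
        = Real.sqrt (max (ξ ω ^ 2 - c) 0) / (γ₁ * lam2 / 2) from by
      field_simp]
    rw [lt_div_iff₀ (by positivity : (0:ℝ) < γ₁ * lam2 / 2)]
    rw [Real.lt_sqrt (mul_nonneg hτ (by positivity))]
    rw [lt_max_iff, or_iff_left (not_lt.mpr (sq_nonneg _))]
    rw [← pow_lt_pow_iff_left₀ hs0 hξ0 (by norm_num : 2 ≠ 0), hs2]
    rw [show (τ * (γ₁ * lam2 / 2)) ^ 2 = (γ₁ * lam2 * τ / 2) ^ 2 from by ring]
    constructor <;> intro h <;> linarith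
  -- measure of the intersection
  have hmax : ℙ ({ω : Ω | b ≤ ξ ω} ∩ {ω | s < ξ ω})
      = ENNReal.ofReal (Real.exp (-(max (s ^ 2) (b ^ 2)) / (2 * lam2))) := by
    rcases le_or_gt b s with h | h
    · have hsub : {ω : Ω | b ≤ ξ ω} ∩ {ω | s < ξ ω} = {ω : Ω | s < ξ ω} :=
        Set.inter_eq_right.mpr fun ω hω => le_trans h (le_of_lt hω)
      rw [hsub, tail_gt s hs0, max_eq_left (pow_le_pow_left₀ hb0 h 2)]
    · have hsub : {ω : Ω | b ≤ ξ ω} ∩ {ω | s < ξ ω} = {ω : Ω | b ≤ ξ ω} :=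
        Set.inter_eq_left.mpr fun ω hω => lt_of_lt_of_le h hω
      rw [hsub, tail_ge b hb0, max_eq_right (pow_le_pow_left₀ hs0 h.le 2)]
  -- exponent identities
  have hmaxexp : -(max (s ^ 2) (b ^ 2)) / (2 * lam2)
      = -V * max (τ ^ 2 + τ₁star ^ 2) (τ₁ ^ 2) := by
    rw [hs2', hb2', ← mul_max_of_nonneg _ _ hk.le, hV]
    field_simp
    ring
  have hexp2 : -(b ^ 2) / (2 * lam2) = -V * τ₁ ^ 2 := by
    rw [hb2', hV]
    field_simp
    ring
  -- assemble
  rw [ProbabilityTheory.cond_apply hBm, hABeq, hmax, tail_ge b hb0, hmaxexp, hexp2]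
  rw [ENNReal.ofReal_div_of_pos (Real.exp_pos _), div_eq_mul_inv, mul_comm]
end

section
/- Let ξ be Rayleigh with parameter √λ₂, γ₂ ≥ γ₁ > 0, V = γ₁²λ₂/8, τ₁* = √(8(γ₂−γ₁)/(γ₁λ₂)), and T₂ = (2/(γ₁λ₂))·√(max{ξ² − 2γ₁λ₂(γ₂−γ₁), 0}) (no conditioning, i.e., τ₁ = 0). Then E[T₂] = exp(−V(τ₁*)²)·√(π/(4V)). -/
open MeasureTheory ProbabilityTheory Real

/-- The unconditional expected length of the successive excursion above γ₂:
E[T₂] = exp(−V(τ₁*)²)·√(π/(4V)). -/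
theorem expected_successive_excursion_length {Ω : Type*} [MeasureSpace Ω]
    [IsProbabilityMeasure (ℙ : Measure Ω)]
    (lam2 γ₁ γ₂ : ℝ) (hlam2 : 0 < lam2) (hγ₁ : 0 < γ₁) (hγ₂ : γ₁ ≤ γ₂)
    (ξ : Ω → ℝ) (hmeas : Measurable ξ)
    (hcdf : ∀ x : ℝ, 0 ≤ x →
      ℙ {ω | ξ ω ≤ x} = ENNReal.ofReal (1 - Real.exp (-(x ^ 2) / (2 * lam2))))
    (T₂ : Ω → ℝ)
    (hT₂ : ∀ ω, T₂ ω =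
      2 / (γ₁ * lam2) * Real.sqrt (max ((ξ ω) ^ 2 - 2 * γ₁ * lam2 * (γ₂ - γ₁)) 0))
    (V τ₁star : ℝ) (hV : V = γ₁ ^ 2 * lam2 / 8)
    (hτ₁star : τ₁star = Real.sqrt (8 * (γ₂ - γ₁) / (γ₁ * lam2))) :
    ∫ ω, T₂ ω ∂ℙ = Real.exp (-V * τ₁star ^ 2) * Real.sqrt (Real.pi / (4 * V)) := by
  have hγlam : 0 < γ₁ * lam2 := mul_pos hγ₁ hlam2
  have hδ : 0 ≤ γ₂ - γ₁ := sub_nonneg.mpr hγ₂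
  have hVpos : 0 < V := by rw [hV]; positivity
  set c : ℝ := 2 / (γ₁ * lam2) with hc_def
  have hc : 0 < c := by positivity
  set a : ℝ := 2 * γ₁ * lam2 * (γ₂ - γ₁) with ha_def
  have ha : 0 ≤ a := by positivity
  set K : ℝ := Real.exp (-(γ₁ * (γ₂ - γ₁))) with hK_def
  -- measurability and nonnegativity of T₂
  have hT₂eq : T₂ = fun ω => c * Real.sqrt (max ((ξ ω) ^ 2 - a) 0) := funext hT₂
  have hT₂m : Measurable T₂ := by
    rw [hT₂eq]
    exact ((Real.continuous_sqrt.measurable.comp (((hmeas.pow_const 2).sub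
      measurable_const).max measurable_const))).const_mul c
  have hnn : 0 ≤ᵐ[ℙ] T₂ := Filter.Eventually.of_forall fun ω => by
    rw [hT₂]; positivity
  -- ξ is a.e. positive
  have hxi_pos : ∀ᵐ ω ∂ℙ, 0 < ξ ω := by
    have h0 : ℙ {ω | ξ ω ≤ 0} = 0 := by simpa using hcdf 0 le_rfl
    rw [ae_iff]
    simpa [not_lt] using h0
  -- the survival function of T₂
  have key : ∀ t ∈ Set.Ioi (0:ℝ),
      ℙ {ω | t < T₂ ω} = ENNReal.ofReal (K * Real.exp (-V * t ^ 2)) := by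
    intro t ht
    have ht : (0:ℝ) < t := ht
    have hsn : 0 ≤ a + (t / c) ^ 2 := by positivity
    set s : ℝ := Real.sqrt (a + (t / c) ^ 2) with hs_def
    have hs0 : 0 ≤ s := Real.sqrt_nonneg _
    have hset : {ω | t < T₂ ω} =ᵐ[ℙ] {ω | s < ξ ω} := by
      filter_upwards [hxi_pos] with ω hω
      have h1 : t < T₂ ω ↔ t / c < Real.sqrt (max ((ξ ω) ^ 2 - a) 0) := by
        rw [hT₂ ω]
        rw [div_lt_iff₀ hc, mul_comm]
      have h2 : t / c < Real.sqrt (max ((ξ ω) ^ 2 - a) 0) ↔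
          (t / c) ^ 2 < max ((ξ ω) ^ 2 - a) 0 :=
        Real.lt_sqrt (by positivity)
      have h3 : (t / c) ^ 2 < max ((ξ ω) ^ 2 - a) 0 ↔ a + (t / c) ^ 2 < (ξ ω) ^ 2 := by
        rw [lt_max_iff]
        constructor
        · rintro (h | h)
          · linarith
          · exact absurd h (not_lt.mpr (by positivity))
        · intro h; left; linarith
      have h4 : a + (t / c) ^ 2 < (ξ ω) ^ 2 ↔ s < ξ ω := by
        rw [hs_def, Real.sqrt_lt' hω]
      show (t < T₂ ω) = (s < ξ ω)
      rw [eq_iff_iff, h1, h2, h3, h4]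
    have hcompl : {ω | s < ξ ω} = {ω | ξ ω ≤ s}ᶜ := by
      ext ω; simp [not_le]
    have hz : -(s ^ 2) / (2 * lam2) ≤ 0 := div_nonpos_iff.mpr (Or.inr ⟨neg_nonpos.mpr (sq_nonneg s), by positivity⟩)
    have hmeasIic : MeasurableSet {ω | ξ ω ≤ s} := hmeas measurableSet_Iic
    rw [measure_congr hset, hcompl,
      measure_compl hmeasIic (measure_ne_top _ _), measure_univ, hcdf s hs0]
    have hexp : Real.exp (-(s ^ 2) / (2 * lam2)) = K * Real.exp (-V * t ^ 2) := by
      rw [hK_def, ← Real.exp_add]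
      congr 1
      rw [hs_def, Real.sq_sqrt hsn, ha_def, hc_def, hV]
      field_simp
      ring
    rw [← hexp, ← ENNReal.ofReal_one,
      ← ENNReal.ofReal_sub _ (by nlinarith [Real.exp_le_one_iff.mpr hz, Real.exp_pos (-(s^2)/(2*lam2))])]
    norm_num
  -- layer cake
  rw [integral_eq_lintegral_of_nonneg_ae hnn hT₂m.aestronglyMeasurable,
    lintegral_eq_lintegral_meas_lt ℙ hnn hT₂m.aemeasurable,
    setLIntegral_congr_fun measurableSet_Ioi (fun t ht => key t ht)]
  have hint : IntegrableOn (fun t => K * Real.exp (-V * t ^ 2)) (Set.Ioi 0) := by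
    exact ((integrable_exp_neg_mul_sq hVpos).integrableOn).const_mul K
  have hnn2 : 0 ≤ᵐ[volume.restrict (Set.Ioi (0:ℝ))] fun t => K * Real.exp (-V * t ^ 2) :=
    Filter.Eventually.of_forall fun t => by positivity
  rw [← MeasureTheory.ofReal_integral_eq_lintegral_ofReal hint hnn2,
    MeasureTheory.integral_const_mul, integral_gaussian_Ioi V,
    ENNReal.toReal_ofReal (by positivity)]
  -- final algebra
  have hτsq : τ₁star ^ 2 = 8 * (γ₂ - γ₁) / (γ₁ * lam2) := by
    rw [hτ₁star, Real.sq_sqrt (by positivity)]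
  have hexp2 : K = Real.exp (-V * τ₁star ^ 2) := by
    rw [hK_def, hτsq, hV]
    congr 1
    field_simp
  have h4 : Real.sqrt 4 = 2 := by
    rw [show (4:ℝ) = 2 ^ 2 by norm_num, Real.sqrt_sq (by norm_num : (0:ℝ) ≤ 2)]
  have hsqrt : Real.sqrt (Real.pi / (4 * V)) = Real.sqrt (Real.pi / V) / 2 := by
    rw [show Real.pi / (4 * V) = (Real.pi / V) / 4 by ring,
      Real.sqrt_div (by positivity) 4, h4]
  rw [hexp2, hsqrt]
end
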